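/- Any edge-weighted graph can be transformed into a flooding graph by keeping only the edges that are a lowest edge of one of their extremities: let G' be the subgraph of G whose edges are the adjacent pairs (i, j) with e i j = (ε_ne e) i or e i j = (ε_ne e) j. Then every vertex of G is incident to at least one edge of G'; for every vertex i, the minimum of e i j over the G'-neighbors j of i equals (ε_ne e) i computed in G; and, setting n = ε_ne e, the pair (n, e) is a flooding graph on G'. -/
import Mathlib


/-- The erosion from edge weights to node weights:
`(ε_ne e) i` is the minimum of `e i j` over the neighbors `j` of `i`. -/
noncomputable def epsNE {V : Type*} [Fintype V] (G : SimpleGraph V) [DecidableRel G.Adj]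
    (h : ∀ i : V, ∃ j, G.Adj i j) (e : V → V → ℝ) (i : V) : ℝ :=
  (G.neighborFinset i).inf'
    ⟨(h i).choose, by rw [SimpleGraph.mem_neighborFinset]; exact (h i).choose_spec⟩
    (fun j => e i j)

lemma epsNE_le {V : Type*} [Fintype V] (G : SimpleGraph V) [DecidableRel G.Adj]
    (h : ∀ i : V, ∃ j, G.Adj i j) (e : V → V → ℝ) {i j : V} (hij : G.Adj i j) :
    epsNE G h e i ≤ e i j :=
  Finset.inf'_le _ (by rwa [SimpleGraph.mem_neighborFinset])

lemma epsNE_exists {V : Type*} [Fintype V] (G : SimpleGraph V) [DecidableRel G.Adj]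
    (h : ∀ i : V, ∃ j, G.Adj i j) (e : V → V → ℝ) (i : V) :
    ∃ j, G.Adj i j ∧ e i j = epsNE G h e i := by
  obtain ⟨j, hj, hje⟩ := Finset.exists_mem_eq_inf' (f := fun j => e i j)
    (s := G.neighborFinset i)
    ⟨(h i).choose, by rw [SimpleGraph.mem_neighborFinset]; exact (h i).choose_spec⟩
  exact ⟨j, by rwa [SimpleGraph.mem_neighborFinset] at hj, hje.symm⟩

/-- Keeping only the edges that are a lowest edge of one of their extremities turns an
edge-weighted graph into a flooding graph: every vertex keeps at least one incident
edge, the minimum edge weight at each vertex computed in the pruned graph `G'` equals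
`(ε_ne e)` computed in `G`, and with `n = ε_ne e` the pair `(n, e)` is a flooding graph
on `G'` (the minimum being expressed via `IsLeast`). -/
theorem pruned_graph_is_flooding {V : Type*} [Fintype V] (G : SimpleGraph V)
    [DecidableRel G.Adj] (h : ∀ i : V, ∃ j, G.Adj i j)
    (e : V → V → ℝ) (hsymm : ∀ i j, G.Adj i j → e i j = e j i)
    (G' : SimpleGraph V)
    (hG' : ∀ i j, G'.Adj i j ↔
      G.Adj i j ∧ (e i j = epsNE G h e i ∨ e i j = epsNE G h e j)) :
    (∀ i : V, ∃ j, G'.Adj i j) ∧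
    (∀ i : V, IsLeast {w : ℝ | ∃ j, G'.Adj i j ∧ w = e i j} (epsNE G h e i)) ∧
    (∀ i j, G'.Adj i j → e i j = max (epsNE G h e i) (epsNE G h e j)) := by
  refine ⟨?_, ?_, ?_⟩
  · intro i
    obtain ⟨j, hij, hje⟩ := epsNE_exists G h e i
    exact ⟨j, (hG' i j).2 ⟨hij, Or.inl hje⟩⟩
  · intro i
    constructor
    · obtain ⟨j, hij, hje⟩ := epsNE_exists G h e i
      exact ⟨j, (hG' i j).2 ⟨hij, Or.inl hje⟩, hje.symm⟩
    · rintro w ⟨j, hj, rfl⟩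
      exact epsNE_le G h e ((hG' i j).1 hj).1
  · intro i j hij
    obtain ⟨hG, hcase⟩ := (hG' i j).1 hij
    have h1 : epsNE G h e i ≤ e i j := epsNE_le G h e hG
    have h2 : epsNE G h e j ≤ e i j := by
      rw [hsymm i j hG]; exact epsNE_le G h e hG.symm
    rcases hcase with hc | hc <;>
      exact le_antisymm (by rw [hc]; simp [h1, h2, le_refl]) (max_le h1 h2)
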